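/- For $n \ge 3$ qubits, the geometric mean of bipartite concurrences (GBC) of the W state is strictly smaller than that of the GHZ state: $\mathcal{G}(|W_n\rangle) < \mathcal{G}(|\mathrm{GHZ}_n\rangle)$. -/

import Mathlib

/-- Multiplicity of the bipartitions of `n` parties whose smaller side has `m`
parties: `n.choose m` for `m < n/2`, and half of that when `n = 2m`. -/
noncomputable def kExp (n m : ℕ) : ℝ :=
  if 2 * m = n then (n.choose m : ℝ) / 2 else (n.choose m : ℝ)

/-- Total number of bipartitions of `n` parties. -/
noncomputable def cAlpha (n : ℕ) : ℝ := ∑ m ∈ Finset.Icc 1 (n / 2), kExp n m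

/-- Closed form for the GHZ-state bipartite concurrence across a bipartition
whose smaller side has `m` qubits. -/
noncomputable def ghzConc (m : ℕ) : ℝ := Real.sqrt ((2:ℝ)^m / (2 * ((2:ℝ)^m - 1)))

/-- Closed form for the W-state bipartite concurrence across a bipartition
whose smaller side has `m` qubits. -/
noncomputable def wConc (n m : ℕ) : ℝ :=
  Real.sqrt ((2:ℝ)^(m+1) * m * ((n:ℝ) - m) / (((2:ℝ)^m - 1) * (n:ℝ)^2))

/-- Product of all bipartite concurrences of the `n`-qubit GHZ state. -/
noncomputable def ghzProd (n : ℕ) : ℝ :=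
  ∏ m ∈ Finset.Icc 1 (n / 2), (ghzConc m) ^ (kExp n m)

/-- Product of all bipartite concurrences of the `n`-qubit W state. -/
noncomputable def wProd (n : ℕ) : ℝ :=
  ∏ m ∈ Finset.Icc 1 (n / 2), (wConc n m) ^ (kExp n m)

/-- The GBC of the `n`-qubit GHZ state (closed form). -/
noncomputable def ghzGBC (n : ℕ) : ℝ := (ghzProd n) ^ (1 / cAlpha n)

/-- The GBC of the `n`-qubit W state (closed form). -/
noncomputable def wGBC (n : ℕ) : ℝ := (wProd n) ^ (1 / cAlpha n)

lemma aux_t_gt (m : ℕ) (hm : 1 ≤ m) : (1:ℝ) < 2^m := by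
  calc (1:ℝ) < 2 := one_lt_two
  _ ≤ 2^m := le_self_pow₀ (by norm_num) (by omega)

lemma ghzConc_pos (m : ℕ) (hm : 1 ≤ m) : 0 < ghzConc m := by
  have ht := aux_t_gt m hm
  have ht1 : (0:ℝ) < 2^m - 1 := by linarith
  apply Real.sqrt_pos.mpr
  apply div_pos (by positivity) (by linarith)

lemma wConc_pos (n m : ℕ) (hm : 1 ≤ m) (hmn : m < n) : 0 < wConc n m := by
  have ht := aux_t_gt m hm
  have h1 : (0:ℝ) < m := by exact_mod_cast hm
  have h2 : (m:ℝ) < n := by exact_mod_cast hmn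
  have h3 : (0:ℝ) < (n:ℝ) - m := by linarith
  have h4 : (0:ℝ) < (n:ℝ) := by linarith
  have ht1 : (0:ℝ) < 2^m - 1 := by linarith
  apply Real.sqrt_pos.mpr
  apply div_pos (by positivity) (mul_pos ht1 (by positivity))

lemma wConc_le_ghzConc (n m : ℕ) (hm : 1 ≤ m) (hmn : 2 * m ≤ n) :
    wConc n m ≤ ghzConc m := by
  have ht := aux_t_gt m hm
  have h2 : (2:ℝ) * m ≤ n := by exact_mod_cast hmn
  have h4 : (0:ℝ) < (n:ℝ) := by
    have : (0:ℝ) < m := by exact_mod_cast hm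
    linarith
  have ht1 : (0:ℝ) < 2^m - 1 := by linarith
  apply Real.sqrt_le_sqrt
  rw [div_le_div_iff₀ (mul_pos ht1 (by positivity)) (by positivity)]
  have key : 4 * (m:ℝ) * ((n:ℝ) - m) ≤ (n:ℝ)^2 := by nlinarith [sq_nonneg ((n:ℝ) - 2*m)]
  have hp : (0:ℝ) < ((2:ℝ)^m - 1) * (2:ℝ)^m := mul_pos ht1 (by positivity)
  calc (2:ℝ)^(m+1) * m * ((n:ℝ) - m) * (2 * ((2:ℝ)^m - 1))
      = (4 * (m:ℝ) * ((n:ℝ) - m)) * (((2:ℝ)^m - 1) * (2:ℝ)^m) := by ring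
    _ ≤ (n:ℝ)^2 * (((2:ℝ)^m - 1) * (2:ℝ)^m) := by
        exact mul_le_mul_of_nonneg_right key hp.le
    _ = (2:ℝ)^m * (((2:ℝ)^m - 1) * (n:ℝ)^2) := by ring

lemma wConc_lt_ghzConc (n m : ℕ) (hm : 1 ≤ m) (hmn : 2 * m < n) :
    wConc n m < ghzConc m := by
  have ht := aux_t_gt m hm
  have h2 : (2:ℝ) * m < n := by exact_mod_cast hmn
  have h4 : (0:ℝ) < (n:ℝ) := by
    have : (0:ℝ) < m := by exact_mod_cast hm
    linarith
  have hm' : (1:ℝ) ≤ m := by exact_mod_cast hm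
  apply Real.sqrt_lt_sqrt (by
    have h3 : (0:ℝ) ≤ (n:ℝ) - m := by linarith
    have ht1 : (0:ℝ) < 2^m - 1 := by linarith
    positivity)
  have ht1 : (0:ℝ) < 2^m - 1 := by linarith
  rw [div_lt_div_iff₀ (mul_pos ht1 (by positivity)) (by positivity)]
  have key : 4 * (m:ℝ) * ((n:ℝ) - m) < (n:ℝ)^2 := by nlinarith [sq_nonneg ((n:ℝ) - 2*m)]
  have hp : (0:ℝ) < ((2:ℝ)^m - 1) * (2:ℝ)^m := mul_pos ht1 (by positivity)
  calc (2:ℝ)^(m+1) * m * ((n:ℝ) - m) * (2 * ((2:ℝ)^m - 1))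
      = (4 * (m:ℝ) * ((n:ℝ) - m)) * (((2:ℝ)^m - 1) * (2:ℝ)^m) := by ring
    _ < (n:ℝ)^2 * (((2:ℝ)^m - 1) * (2:ℝ)^m) := by
        exact mul_lt_mul_of_pos_right key hp
    _ = (2:ℝ)^m * (((2:ℝ)^m - 1) * (n:ℝ)^2) := by ring

lemma kExp_nonneg (n m : ℕ) : 0 ≤ kExp n m := by
  unfold kExp; split <;> positivity

lemma kExp_pos (n m : ℕ) (h : n.choose m ≠ 0) : 0 < kExp n m := by
  have : (0:ℝ) < (n.choose m : ℝ) := by exact_mod_cast Nat.pos_of_ne_zero h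
  unfold kExp; split <;> positivity

lemma cAlpha_pos (n : ℕ) (hn : 3 ≤ n) : 0 < cAlpha n := by
  unfold cAlpha
  have h1 : 1 ∈ Finset.Icc 1 (n / 2) := by
    simp only [Finset.mem_Icc]
    omega
  apply Finset.sum_pos' (fun i _ => kExp_nonneg n i)
  exact ⟨1, h1, kExp_pos n 1 (by simp; omega)⟩

/-- For `n ≥ 3` qubits, the GBC of the W state is strictly smaller than the GBC
of the GHZ state. -/
theorem wGBC_lt_ghzGBC (n : ℕ) (hn : 3 ≤ n) : wGBC n < ghzGBC n := by
  have hmem : ∀ m ∈ Finset.Icc 1 (n / 2), 1 ≤ m ∧ 2 * m ≤ n := by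
    intro m hm
    simp only [Finset.mem_Icc] at hm
    omega
  have hwpos : ∀ m ∈ Finset.Icc 1 (n / 2), 0 < (wConc n m) ^ (kExp n m) := by
    intro m hm
    obtain ⟨h1, h2⟩ := hmem m hm
    exact Real.rpow_pos_of_pos (wConc_pos n m h1 (by omega)) _
  have hle : ∀ m ∈ Finset.Icc 1 (n / 2),
      (wConc n m) ^ (kExp n m) ≤ (ghzConc m) ^ (kExp n m) := by
    intro m hm
    obtain ⟨h1, h2⟩ := hmem m hm
    exact Real.rpow_le_rpow (wConc_pos n m h1 (by omega)).le
      (wConc_le_ghzConc n m h1 h2) (kExp_nonneg n m)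
  have h1mem : 1 ∈ Finset.Icc 1 (n / 2) := by
    simp only [Finset.mem_Icc]; omega
  have hlt : (wConc n 1) ^ (kExp n 1) < (ghzConc 1) ^ (kExp n 1) := by
    apply Real.rpow_lt_rpow (wConc_pos n 1 le_rfl (by omega)).le
      (wConc_lt_ghzConc n 1 le_rfl (by omega))
      (kExp_pos n 1 (by simp; omega))
  have hprod : wProd n < ghzProd n :=
    Finset.prod_lt_prod hwpos hle ⟨1, h1mem, hlt⟩
  have hwp : 0 < wProd n := Finset.prod_pos hwpos
  have hc := cAlpha_pos n hn
  exact Real.rpow_lt_rpow hwp.le hprod (by positivity)
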